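/- arXiv:1502.04375 — 4 statements merged into one kernel-verified Lean document; each statement's English description precedes it below -/
import Mathlib

section
/- Let G = (ℝ, +) act on X = ℝ² by g · (t,s) = (t, t·g + s), and let x : ℝ → ℝ² be x(t) = (t, 0). Then the isotropy set G_x = { (t,g) ∈ ℝ × ℝ : g · x(t) = x(t) } equals ({0} × ℝ) ∪ (ℝ \ {0} × {0}), this set is closed in ℝ², and the quotient map π : ℝ × ℝ → (ℝ × ℝ)/∼ for the equivalence relation (t,g) ∼ (t',g') ⟺ t = t' ∧ g · x(t) = g' · x(t), endowed with the quotient topology, is not an open map. -/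
/-- For the action of `(ℝ,+)` on `ℝ²` by `g · (t,s) = (t, tg + s)` and the point
`x(t) = (t,0)`: the isotropy is `({0} × ℝ) ∪ ((ℝ \ {0}) × {0})`, a closed set, but the
quotient map of `ℝ × ℝ` by the relation `(t,g) ∼ (t',g') ↔ t = t' ∧ g·x(t) = g'·x(t)`
is not an open map. -/
theorem stmt_4 (act : ℝ → ℝ × ℝ → ℝ × ℝ)
    (hact : ∀ g p, act g p = (p.1, p.1 * g + p.2))
    (x : ℝ → ℝ × ℝ) (hx : ∀ t, x t = (t, 0))
    (r : ℝ × ℝ → ℝ × ℝ → Prop)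
    (hr : ∀ p q : ℝ × ℝ, r p q ↔ p.1 = q.1 ∧ act p.2 (x p.1) = act q.2 (x p.1)) :
    {p : ℝ × ℝ | act p.2 (x p.1) = x p.1}
      = (({0} : Set ℝ) ×ˢ (Set.univ : Set ℝ)) ∪ ((({0} : Set ℝ)ᶜ) ×ˢ ({0} : Set ℝ)) ∧
    IsClosed {p : ℝ × ℝ | act p.2 (x p.1) = x p.1} ∧
    ¬ IsOpenMap (Quot.mk r) := by
  -- simplify the membership condition
  have key : ∀ p : ℝ × ℝ, act p.2 (x p.1) = x p.1 ↔ p.1 * p.2 = 0 := by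
    intro p
    rw [hact, hx]
    simp [Prod.ext_iff]
  -- simplify the relation
  have keyr : ∀ p q : ℝ × ℝ, r p q ↔ p.1 = q.1 ∧ p.1 * p.2 = p.1 * q.2 := by
    intro p q
    rw [hr, hact, hact, hx]
    simp [Prod.ext_iff]
  have requiv : Equivalence r := by
    constructor
    · intro p; rw [keyr]; exact ⟨rfl, rfl⟩
    · intro p q h; rw [keyr] at *; exact ⟨h.1.symm, by rw [← h.1]; exact h.2.symm⟩
    · intro p q s h1 h2; rw [keyr] at *
      exact ⟨h1.1.trans h2.1, by rw [h1.2, h1.1, h2.2]⟩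
  refine ⟨?_, ?_, ?_⟩
  · ext p
    simp only [Set.mem_setOf_eq, key, mul_eq_zero, Set.mem_union, Set.mem_prod,
      Set.mem_singleton_iff, Set.mem_univ, Set.mem_compl_iff, and_true]
    tauto
  · have : {p : ℝ × ℝ | act p.2 (x p.1) = x p.1} = {p : ℝ × ℝ | p.1 * p.2 = 0} := by
      ext p; exact key p
    rw [this]
    exact isClosed_eq (by continuity) continuous_const
  · intro hopen
    have hU : IsOpen ((Set.univ : Set ℝ) ×ˢ Set.Ioi (0 : ℝ)) :=
      isOpen_univ.prod isOpen_Ioi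
    have h2 := hopen _ hU
    rw [isOpen_coinduced] at h2
    have hpre : Quot.mk r ⁻¹' (Quot.mk r '' ((Set.univ : Set ℝ) ×ˢ Set.Ioi (0 : ℝ)))
        = {q : ℝ × ℝ | q.1 = 0 ∨ 0 < q.2} := by
      ext q
      simp only [Set.mem_preimage, Set.mem_image, Set.mem_prod, Set.mem_univ, true_and,
        Set.mem_Ioi, Set.mem_setOf_eq]
      constructor
      · rintro ⟨p, hp, he⟩
        rw [Quot.eq, requiv.eqvGen_iff, keyr] at he
        rcases eq_or_ne q.1 0 with h0 | h0
        · exact Or.inl h0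
        · right
          have := he.2
          rw [he.1] at this
          have : q.2 = p.2 := by
            exact (mul_left_cancel₀ h0 this).symm
          rw [this]; exact hp
      · rintro (h0 | hq)
        · refine ⟨(q.1, 1), zero_lt_one, ?_⟩
          rw [Quot.eq, requiv.eqvGen_iff, keyr]
          exact ⟨rfl, by simp [h0]⟩
        · exact ⟨q, hq, rfl⟩
    rw [hpre] at h2
    -- (0,0) is in the set, but no neighborhood is contained
    rw [Metric.isOpen_iff] at h2
    obtain ⟨ε, hε, hball⟩ := h2 (0, 0) (Or.inl rfl)
    have hmem : ((ε / 2, 0) : ℝ × ℝ) ∈ Metric.ball ((0, 0) : ℝ × ℝ) ε := by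
      rw [Metric.mem_ball, Prod.dist_eq]
      simp only [Real.dist_eq, sub_zero, abs_of_pos (half_pos hε), max_lt_iff, abs_zero]
      constructor <;> linarith
    have := hball hmem
    simp only [Set.mem_setOf_eq] at this
    rcases this with h | h
    · exact absurd h (by positivity)
    · exact lt_irrefl 0 h
end

section
/- Let R be a local commutative ring with maximal ideal m and residue field k, let E be a finitely generated R-module, F a finite free R-module, and φ : E → F an R-linear map. If the induced k-linear map φ̄ : E/mE → F/mF is injective, then φ is injective and admits an R-linear left inverse; in particular E is a free R-module. -/
open IsLocalRing

/-- Over a local ring `(R, m, k)`: if `φ : E → F` (with `E` finitely generated and `F`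
finite free) induces an injective map `E/mE → F/mF` (equivalently, `φ x ∈ mF → x ∈ mE`),
then `φ` is injective, admits an `R`-linear left inverse, and `E` is free. -/
theorem stmt_5 {R : Type*} [CommRing R] [IsLocalRing R]
    {E F : Type*} [AddCommGroup E] [Module R E] [AddCommGroup F] [Module R F]
    [Module.Finite R E] [Module.Free R F] [Module.Finite R F]
    (φ : E →ₗ[R] F)
    (hinj : ∀ x : E, φ x ∈ (maximalIdeal R) • (⊤ : Submodule R F) →
      x ∈ (maximalIdeal R) • (⊤ : Submodule R E)) :
    Function.Injective φ ∧ (∃ ψ : F →ₗ[R] E, ψ ∘ₗ φ = LinearMap.id) ∧ Module.Free R E := by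
  classical
  set m := maximalIdeal R
  -- the induced map on the quotients
  have hle : m • (⊤ : Submodule R E) ≤
      Submodule.comap φ (m • (⊤ : Submodule R F)) := by
    intro x hx
    exact Submodule.smul_le.2 (fun r hr y _ => by
      simpa using Submodule.smul_mem_smul hr (Submodule.mem_top (x := φ y))) hx
  set φbar := Submodule.mapQ (m • (⊤ : Submodule R E)) (m • (⊤ : Submodule R F)) φ hle
  have hφbar : Function.Injective φbar := by
    rw [← LinearMap.ker_eq_bot, eq_bot_iff]
    intro x hx
    obtain ⟨x, rfl⟩ := Submodule.mkQ_surjective _ x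
    simp only [LinearMap.mem_ker, Submodule.mkQ_apply, Submodule.mapQ_apply, φbar,
      Submodule.Quotient.mk_eq_zero] at hx
    simpa [Submodule.Quotient.mk_eq_zero] using hinj x hx
  -- injectivity of `k ⊗ φ`
  have key : Function.Injective (φ.lTensor (ResidueField R)) := by
    rw [injective_iff_map_eq_zero]
    intro z hz
    obtain ⟨x, rfl⟩ :=
      TensorProduct.mk_surjective R E (ResidueField R) Ideal.Quotient.mk_surjective z
    have hz' : (1 : ResidueField R) ⊗ₜ[R] (φ x) = 0 := hz
    have h3 : Submodule.Quotient.mk (p := m • (⊤ : Submodule R F)) (φ x) = 0 := by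
      apply (TensorProduct.quotTensorEquivQuotSMul F m).symm.injective
      rw [map_zero, TensorProduct.quotTensorEquivQuotSMul_symm_mk]
      exact hz'
    have h4 : x ∈ m • (⊤ : Submodule R E) :=
      hinj x ((Submodule.Quotient.mk_eq_zero _).mp h3)
    have h5 : Submodule.Quotient.mk (p := m • (⊤ : Submodule R E)) x = 0 :=
      (Submodule.Quotient.mk_eq_zero _).mpr h4
    have h6 : (TensorProduct.quotTensorEquivQuotSMul E m).symm
        (Submodule.Quotient.mk (p := m • (⊤ : Submodule R E)) x) =
        (TensorProduct.mk R (ResidueField R) E) 1 x :=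
      TensorProduct.quotTensorEquivQuotSMul_symm_mk m x
    rw [← h6, h5, map_zero]; rfl
  obtain ⟨ψ, hψ⟩ :=
    (IsLocalRing.split_injective_iff_lTensor_residueField_injective φ).2 key
  have hφinj : Function.Injective φ :=
    Function.HasLeftInverse.injective ⟨ψ, LinearMap.congr_fun hψ⟩
  refine ⟨hφinj, ⟨ψ, hψ⟩, ?_⟩
  have : Module.Projective R E := Module.Projective.of_split φ ψ hψ
  have : Module.FinitePresentation R E := Module.finitePresentation_of_projective R E
  exact Module.free_of_flat_of_isLocalRing
end

section
/- Let A be a (possibly noncommutative) ring and δ : A → A an additive map satisfying δ(fg) = δ(f)g + fδ(g) + δ(f)δ(g) for all f,g ∈ A. Let I ⊆ A be a two-sided ideal with δ(A) ⊆ I and δ(I) ⊆ I². Then δ(Iᵏ) ⊆ I^{k+1} for all k ≥ 1. Consequently, if I^{n+1} = 0 then δ^{n+1} = 0 and id + δ is bijective on A. -/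
open Pointwise

/-- The additive subgroup generated by products of elements of `P` and `Q`. -/
def agMul {A : Type*} [Ring A] (P Q : AddSubgroup A) : AddSubgroup A :=
  AddSubgroup.closure ((P : Set A) * (Q : Set A))

/-- Powers of an additive subgroup of a ring: `I⁰ = A`, `I¹ = I`, `I^{k+1} = I^k · I`. -/
def agPow {A : Type*} [Ring A] (I : AddSubgroup A) : ℕ → AddSubgroup A
  | 0 => ⊤
  | 1 => I
  | (k + 2) => agMul (agPow I (k + 1)) I

section Aux
variable {A : Type*} [Ring A]

lemma agMul_le {P Q S : AddSubgroup A} (h : ∀ p ∈ P, ∀ q ∈ Q, p * q ∈ S) :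
    agMul P Q ≤ S :=
  (AddSubgroup.closure_le S).2 (Set.mul_subset_iff.2 h)

lemma mem_agMul {P Q : AddSubgroup A} {a b : A} (ha : a ∈ P) (hb : b ∈ Q) :
    a * b ∈ agMul P Q :=
  AddSubgroup.subset_closure (Set.mul_mem_mul ha hb)

lemma agPow_succ_eq (I : AddSubgroup A) {k : ℕ} (hk : 1 ≤ k) :
    agPow I (k + 1) = agMul (agPow I k) I := by
  match k, hk with
  | (m+1), _ => rfl

variable {I : AddSubgroup A}
  (hIl : ∀ (r : A) (a : A), a ∈ I → r * a ∈ I)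
  (hIr : ∀ (r : A) (a : A), a ∈ I → a * r ∈ I)

include hIl in
lemma agPow_mul_left : ∀ k, 1 ≤ k → ∀ (r : A), ∀ a ∈ agPow I k, r * a ∈ agPow I k := by
  intro k
  induction k with
  | zero => intro h; omega
  | succ k ih =>
    rcases Nat.eq_zero_or_pos k with rfl | hk
    · intro _ r a ha
      simpa [agPow] using hIl r a (by simpa [agPow] using ha)
    · intro _ r a ha
      rw [agPow_succ_eq I hk] at ha ⊢
      have : agMul (agPow I k) I ≤ (agMul (agPow I k) I).comap (AddMonoidHom.mulLeft r) := by
        refine agMul_le ?_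
        intro p hp q hq
        simpa [mul_assoc] using mem_agMul (ih hk r p hp) hq
      exact this ha

include hIr in
lemma agPow_mul_right : ∀ k, 1 ≤ k → ∀ (r : A), ∀ a ∈ agPow I k, a * r ∈ agPow I k := by
  intro k
  induction k with
  | zero => intro h; omega
  | succ k ih =>
    rcases Nat.eq_zero_or_pos k with rfl | hk
    · intro _ r a ha
      simpa [agPow] using hIr r a (by simpa [agPow] using ha)
    · intro _ r a ha
      rw [agPow_succ_eq I hk] at ha ⊢
      have : agMul (agPow I k) I ≤ (agMul (agPow I k) I).comap (AddMonoidHom.mulRight r) := by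
        refine agMul_le ?_
        intro p hp q hq
        simpa [mul_assoc] using mem_agMul hp (hIr r q hq)
      exact this ha

include hIr in
lemma agPow_mono_succ {k : ℕ} (hk : 1 ≤ k) : agPow I (k + 1) ≤ agPow I k := by
  rw [agPow_succ_eq I hk]
  exact agMul_le fun p hp q hq => agPow_mul_right hIr k hk q p hp

include hIr in
lemma mul_mem_agPow : ∀ k, 1 ≤ k → ∀ j, 1 ≤ j → ∀ a ∈ agPow I j, ∀ b ∈ agPow I k,
    a * b ∈ agPow I (j + k) := by
  intro k
  induction k with
  | zero => intro h; omega
  | succ k ih =>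
    rcases Nat.eq_zero_or_pos k with rfl | hk
    · intro _ j hj a ha b hb
      rw [agPow_succ_eq I hj]
      exact mem_agMul ha (by simpa [agPow] using hb)
    · intro _ j hj a ha b hb
      rw [agPow_succ_eq I hk] at hb
      have goal : agMul (agPow I k) I ≤ (agPow I (j + (k+1))).comap (AddMonoidHom.mulLeft a) := by
        refine agMul_le ?_
        intro p hp q hq
        have h1 : a * p ∈ agPow I (j + k) := ih hk j hj a ha p hp
        have : (a * p) * q ∈ agPow I (j + k + 1) := by
          rw [agPow_succ_eq I (by omega)]
          exact mem_agMul h1 hq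
        simpa [mul_assoc, Nat.add_assoc] using this
      exact goal hb

end Aux

/-- If `δ : A → A` is additive with `δ(fg) = δ(f)g + fδ(g) + δ(f)δ(g)`, and `I` is a
two-sided ideal with `δ(A) ⊆ I` and `δ(I) ⊆ I²`, then `δ(Iᵏ) ⊆ I^{k+1}` for all `k ≥ 1`;
consequently, if `I^{n+1} = 0`, then `δ^{n+1} = 0` and `id + δ` is bijective. -/
theorem stmt_8 {A : Type*} [Ring A] (δ : A →+ A)
    (hδmul : ∀ f g : A, δ (f * g) = δ f * g + f * δ g + δ f * δ g)
    (I : AddSubgroup A)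
    (hIl : ∀ (r : A) (a : A), a ∈ I → r * a ∈ I)
    (hIr : ∀ (r : A) (a : A), a ∈ I → a * r ∈ I)
    (hδA : ∀ a : A, δ a ∈ I)
    (hδI : ∀ a ∈ I, δ a ∈ agPow I 2) :
    (∀ k : ℕ, 1 ≤ k → ∀ a ∈ agPow I k, δ a ∈ agPow I (k + 1)) ∧
    (∀ n : ℕ, agPow I (n + 1) = ⊥ →
      (∀ a : A, (⇑δ)^[n + 1] a = 0) ∧ Function.Bijective (fun a : A => a + δ a)) := by
  have hmain : ∀ k : ℕ, 1 ≤ k → ∀ a ∈ agPow I k, δ a ∈ agPow I (k + 1) := by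
    intro k
    induction k with
    | zero => intro h; omega
    | succ k ih =>
      rcases Nat.eq_zero_or_pos k with rfl | hk
      · intro _ a ha
        exact hδI a (by simpa [agPow] using ha)
      · intro _ a ha
        rw [agPow_succ_eq I hk] at ha
        have goal : agMul (agPow I k) I ≤ (agPow I (k + 2)).comap δ := by
          refine agMul_le ?_
          intro p hp q hq
          have hδp : δ p ∈ agPow I (k + 1) := ih hk p hp
          have hδq : δ q ∈ agPow I 2 := hδI q hq
          have t1 : δ p * q ∈ agPow I (k + 2) :=
            mul_mem_agPow hIr 1 le_rfl (k + 1) (by omega) _ hδp _ hq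
          have t2 : p * δ q ∈ agPow I (k + 2) :=
            mul_mem_agPow hIr 2 (by omega) k hk _ hp _ hδq
          have t3 : δ p * δ q ∈ agPow I (k + 2) := by
            have : δ p * δ q ∈ agPow I (k + 3) :=
              mul_mem_agPow hIr 2 (by omega) (k + 1) (by omega) _ hδp _ hδq
            exact agPow_mono_succ hIr (by omega) this
          show δ (p * q) ∈ agPow I (k + 2)
          rw [hδmul p q]
          exact AddSubgroup.add_mem _ (AddSubgroup.add_mem _ t1 t2) t3
        exact goal ha
  refine ⟨hmain, ?_⟩
  intro n hbot
  have hiter : ∀ m : ℕ, ∀ a : A, (⇑δ)^[m + 1] a ∈ agPow I (m + 1) := by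
    intro m
    induction m with
    | zero => intro a; simpa [agPow] using hδA a
    | succ m ih =>
      intro a
      rw [Function.iterate_succ_apply']
      exact hmain (m + 1) (by omega) _ (ih a)
  have hzero : ∀ a : A, (⇑δ)^[n + 1] a = 0 := by
    intro a
    have := hiter n a
    rw [hbot] at this
    simpa using this
  refine ⟨hzero, ?_⟩
  -- view δ as an additive monoid endomorphism
  set N : AddMonoid.End A := δ with hN
  have hpow : ∀ m : ℕ, ∀ a : A, (N ^ m) a = (⇑δ)^[m] a := by
    intro m
    induction m with
    | zero => intro a; rfl
    | succ m ih =>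
      intro a
      rw [pow_succ', Function.iterate_succ_apply']
      show δ ((N ^ m) a) = δ ((⇑δ)^[m] a)
      rw [ih]
  have hnil : IsNilpotent N := by
    refine ⟨n + 1, ?_⟩
    refine AddMonoidHom.ext fun a => ?_
    exact (hpow _ a).trans (hzero a)
  obtain ⟨u, hu⟩ := hnil.isUnit_one_add
  have hfun : (fun a : A => a + δ a) = ⇑(1 + N) := by
    funext a
    rfl
  rw [hfun]
  refine Function.bijective_iff_has_inverse.2 ⟨⇑(↑u⁻¹ : AddMonoid.End A), ?_, ?_⟩
  · intro a
    have : ((↑u⁻¹ : AddMonoid.End A) * (1 + N)) a = a := by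
      rw [← hu, u.inv_mul]; rfl
    exact this
  · intro a
    have : ((1 + N) * (↑u⁻¹ : AddMonoid.End A)) a = a := by
      rw [← hu, u.mul_inv]; rfl
    exact this
end

section
/- Let C be a category with finite products and terminal object, G a group object in C, X a G-space, and x : T → X a T-valued point such that the isotropy group object G_x is representable and the orbit π_x : G_T → G·x exists as a universal categorical quotient of G_T by the right G_x-action. Then there is a unique morphism a : G × (G·x) → G·x making π_x equivariant (a ∘ (id_G × π_x) = π_x ∘ m), this morphism is a group action of G on G·x, and the canonical point x : T → G·x is invariant under the action of G_x. -/
open CategoryTheory CategoryTheory.Limits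

set_option maxHeartbeats 1000000

attribute [local simp] prod.lift_fst prod.lift_snd prod.lift_fst_assoc prod.lift_snd_assoc

/-- Proposition 'orbit-action': if the isotropy `G_x` is representable (via a morphism
`j : Gx ⟶ T ⨯ G`) and the orbit `π : T ⨯ G ⟶ Q` is a universal categorical quotient of
`G_T` by the right `G_x`-action, then there is a unique morphism `aQ : G ⨯ Q ⟶ Q` with
`(id_G ⨯ π) ≫ aQ = m ≫ π`; it is a `G`-action on `Q = G·x`, `π` is `G`-equivariant, and
the canonical point of `G·x` is invariant under `G_x`. -/
theorem stmt_18 {C : Type*} [Category C] [Limits.HasFiniteProducts C]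
    (G X T Gx Q : C)
    (one : ⊤_ C ⟶ G) (mul : G ⨯ G ⟶ G) (inv : G ⟶ G) (act : G ⨯ X ⟶ X)
    -- group laws on points
    (hassoc : ∀ (R : C) (f g h : R ⟶ G),
      prod.lift (prod.lift f g ≫ mul) h ≫ mul = prod.lift f (prod.lift g h ≫ mul) ≫ mul)
    (hone_mul : ∀ (R : C) (f : R ⟶ G), prod.lift (terminal.from R ≫ one) f ≫ mul = f)
    (hmul_one : ∀ (R : C) (f : R ⟶ G), prod.lift f (terminal.from R ≫ one) ≫ mul = f)
    (hinv_mul : ∀ (R : C) (f : R ⟶ G),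
      prod.lift (f ≫ inv) f ≫ mul = terminal.from R ≫ one)
    -- action laws on points
    (hone_act : ∀ (R : C) (y : R ⟶ X), prod.lift (terminal.from R ≫ one) y ≫ act = y)
    (hmul_act : ∀ (R : C) (g h : R ⟶ G) (y : R ⟶ X),
      prod.lift (prod.lift g h ≫ mul) y ≫ act = prod.lift g (prod.lift h y ≫ act) ≫ act)
    -- the `T`-valued point
    (x : T ⟶ X)
    -- `Gx` represents the isotropy functor: its points are pairs `(t, g)` with
    -- `g · x(t) = x(t)`
    (j : Gx ⟶ T ⨯ G)
    (hj_mono : Mono j)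
    (hj_prop : ∀ (R : C) (h : R ⟶ Gx),
      prod.lift (h ≫ j ≫ prod.snd) ((h ≫ j ≫ prod.fst) ≫ x) ≫ act
        = (h ≫ j ≫ prod.fst) ≫ x)
    (hj_lift : ∀ (R : C) (t : R ⟶ T) (g : R ⟶ G),
      prod.lift g (t ≫ x) ≫ act = t ≫ x → ∃! h : R ⟶ Gx, h ≫ j = prod.lift t g)
    -- the two maps of the action groupoid of the right `Gx`-action on `G_T = T ⨯ G`,
    -- parametrized by `G ⨯ Gx`:  `(g, h) ↦ (t_h, g·g_h)` and `(g, h) ↦ (t_h, g)`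
    (p q : G ⨯ Gx ⟶ T ⨯ G)
    (hp : p = prod.lift (prod.snd ≫ j ≫ prod.fst)
      (prod.lift prod.fst (prod.snd ≫ j ≫ prod.snd) ≫ mul))
    (hq : q = prod.lift (prod.snd ≫ j ≫ prod.fst) prod.fst)
    -- `π : G_T ⟶ Q` is a universal categorical quotient: it coequalizes `p, q` and
    -- all its base changes `id_Z ⨯ π` are again coequalizers
    (π : T ⨯ G ⟶ Q)
    (hπ_eq : p ≫ π = q ≫ π)
    (hπ_coeq : ∀ (Y : C) (f : T ⨯ G ⟶ Y), p ≫ f = q ≫ f →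
      ∃! f' : Q ⟶ Y, π ≫ f' = f)
    (hπ_univ : ∀ (Z Y : C) (f : Z ⨯ (T ⨯ G) ⟶ Y),
      prod.map (𝟙 Z) p ≫ f = prod.map (𝟙 Z) q ≫ f →
      ∃! f' : Z ⨯ Q ⟶ Y, prod.map (𝟙 Z) π ≫ f' = f) :
    -- conclusion: a unique `G`-action on the orbit making `π` equivariant, and the
    -- canonical point of the orbit is `G_x`-invariant
    ∃! aQ : G ⨯ Q ⟶ Q,
      (prod.map (𝟙 G) π ≫ aQ
        = prod.lift (prod.snd ≫ prod.fst)
            (prod.lift prod.fst (prod.snd ≫ prod.snd) ≫ mul) ≫ π) ∧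
      (∀ (R : C) (qp : R ⟶ Q), prod.lift (terminal.from R ≫ one) qp ≫ aQ = qp) ∧
      (∀ (R : C) (g g' : R ⟶ G) (qp : R ⟶ Q),
        prod.lift (prod.lift g g' ≫ mul) qp ≫ aQ
          = prod.lift g (prod.lift g' qp ≫ aQ) ≫ aQ) ∧
      (∀ (R : C) (h : R ⟶ Gx),
        prod.lift (h ≫ j ≫ prod.snd)
            ((h ≫ j ≫ prod.fst) ≫ prod.lift (𝟙 T) (terminal.from T ≫ one) ≫ π) ≫ aQ
          = (h ≫ j ≫ prod.fst) ≫ prod.lift (𝟙 T) (terminal.from T ≫ one) ≫ π) := by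

  classical
  set μ : G ⨯ (T ⨯ G) ⟶ T ⨯ G :=
    prod.lift (prod.snd ≫ prod.fst)
      (prod.lift prod.fst (prod.snd ≫ prod.snd) ≫ mul) with hμ
  have hφp : prod.map (𝟙 G) p ≫ μ =
      prod.lift (prod.lift prod.fst (prod.snd ≫ prod.fst) ≫ mul)
        (prod.snd ≫ prod.snd) ≫ p := by
    subst hp
    apply Limits.prod.hom_ext
    · simp [hμ, prod.comp_lift_assoc]
    · simp [hμ, prod.comp_lift_assoc, hassoc]
  have hφq : prod.map (𝟙 G) q ≫ μ =
      prod.lift (prod.lift prod.fst (prod.snd ≫ prod.fst) ≫ mul)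
        (prod.snd ≫ prod.snd) ≫ q := by
    subst hq
    apply Limits.prod.hom_ext
    · simp [hμ, prod.comp_lift_assoc]
    · simp [hμ, prod.comp_lift_assoc]
  have hcoeq : prod.map (𝟙 G) p ≫ (μ ≫ π) = prod.map (𝟙 G) q ≫ (μ ≫ π) := by
    rw [← Category.assoc, ← Category.assoc, hφp, hφq, Category.assoc, Category.assoc,
      hπ_eq]
  obtain ⟨aQ, haQ, huniq⟩ := hπ_univ G Q (μ ≫ π) hcoeq
  have hπ_epi : Epi π := by
    constructor
    intro Y u v huv
    obtain ⟨w, -, hw⟩ := hπ_coeq Y (π ≫ u)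
      (by rw [← Category.assoc, hπ_eq, Category.assoc])
    exact (hw u rfl).trans (hw v huv.symm).symm
  have hmap_epi : ∀ Z : C, Epi (prod.map (𝟙 Z) π) := by
    intro Z
    have hcomm : prod.map (𝟙 Z) p ≫ prod.map (𝟙 Z) π
        = prod.map (𝟙 Z) q ≫ prod.map (𝟙 Z) π := by
      rw [prod.map_map, prod.map_map, hπ_eq]
    constructor
    intro Y u v huv
    obtain ⟨w, -, hw⟩ := hπ_univ Z Y (prod.map (𝟙 Z) π ≫ u)
      (by rw [← Category.assoc, hcomm, Category.assoc])
    exact (hw u rfl).trans (hw v huv.symm).symm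
  have hE : Epi (prod.map (𝟙 G) (prod.map (𝟙 G) π)) := by
    have hiso : prod.map (𝟙 G) (prod.map (𝟙 G) π) =
        (prod.associator G G (T ⨯ G)).inv ≫ prod.map (𝟙 (G ⨯ G)) π ≫
          (prod.associator G G Q).hom := by
      apply Limits.prod.hom_ext
      · simp
      · apply Limits.prod.hom_ext <;> simp
    rw [hiso]
    have := hmap_epi (G ⨯ G)
    exact epi_comp _ _
  refine ⟨aQ, ⟨haQ, ?_, ?_, ?_⟩, ?_⟩
  · -- unit law
    intro R qp
    have h1 : π ≫ prod.lift (terminal.from Q ≫ one) (𝟙 Q)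
        = prod.lift (terminal.from (T ⨯ G) ≫ one) (𝟙 (T ⨯ G)) ≫ prod.map (𝟙 G) π := by
      apply Limits.prod.hom_ext
      · simp only [Category.assoc, prod.lift_fst, prod.map_fst, prod.lift_fst_assoc,
          Category.comp_id]
        rw [← Category.assoc, terminal.comp_from]
      · simp
    have h2 : prod.lift (terminal.from (T ⨯ G) ≫ one) (𝟙 (T ⨯ G)) ≫ μ
        = 𝟙 (T ⨯ G) := by
      apply Limits.prod.hom_ext
      · simp [hμ]
      · simp [hμ, prod.comp_lift_assoc, hone_mul]
    have key : prod.lift (terminal.from Q ≫ one) (𝟙 Q) ≫ aQ = 𝟙 Q := by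
      rw [← cancel_epi π]
      calc π ≫ prod.lift (terminal.from Q ≫ one) (𝟙 Q) ≫ aQ
          = (π ≫ prod.lift (terminal.from Q ≫ one) (𝟙 Q)) ≫ aQ := by
            rw [Category.assoc]
        _ = (prod.lift (terminal.from (T ⨯ G) ≫ one) (𝟙 (T ⨯ G)) ≫
              prod.map (𝟙 G) π) ≫ aQ := by rw [h1]
        _ = prod.lift (terminal.from (T ⨯ G) ≫ one) (𝟙 (T ⨯ G)) ≫ μ ≫ π := by
            rw [Category.assoc, haQ]
        _ = π := by rw [← Category.assoc, h2, Category.id_comp]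
        _ = π ≫ 𝟙 Q := by rw [Category.comp_id]
    have h3 : prod.lift (terminal.from R ≫ one) qp
        = qp ≫ prod.lift (terminal.from Q ≫ one) (𝟙 Q) := by
      apply Limits.prod.hom_ext
      · simp only [prod.lift_fst, Category.assoc, prod.lift_fst_assoc, Category.comp_id]
        rw [← Category.assoc, terminal.comp_from]
      · simp
    rw [h3, Category.assoc, key, Category.comp_id]
  · -- associativity law
    intro R g g' qp
    have hL : prod.map (𝟙 G) (prod.map (𝟙 G) π) ≫
        prod.lift (prod.lift prod.fst (prod.snd ≫ prod.fst) ≫ mul)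
          (prod.snd ≫ prod.snd)
        = prod.lift (prod.lift prod.fst (prod.snd ≫ prod.fst) ≫ mul)
          (prod.snd ≫ prod.snd) ≫ prod.map (𝟙 G) π := by
      apply Limits.prod.hom_ext
      · simp [prod.comp_lift_assoc]
      · simp
    have hR : prod.map (𝟙 G) (prod.map (𝟙 G) π) ≫ prod.lift prod.fst (prod.snd ≫ aQ)
        = prod.lift prod.fst (prod.snd ≫ μ) ≫ prod.map (𝟙 G) π := by
      apply Limits.prod.hom_ext
      · simp
      · simp only [Category.assoc, prod.lift_snd, prod.map_snd, prod.map_snd_assoc,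
          prod.lift_snd_assoc]
        rw [haQ]
    have hμμ : prod.lift (prod.lift prod.fst (prod.snd ≫ prod.fst) ≫ mul)
          (prod.snd ≫ prod.snd) ≫ μ
        = prod.lift prod.fst (prod.snd ≫ μ) ≫ μ := by
      apply Limits.prod.hom_ext
      · simp [hμ, prod.comp_lift_assoc]
      · simp [hμ, prod.comp_lift_assoc, hassoc]
    have key : prod.lift (prod.lift prod.fst (prod.snd ≫ prod.fst) ≫ mul)
          (prod.snd ≫ prod.snd) ≫ aQ
        = prod.lift prod.fst (prod.snd ≫ aQ) ≫ aQ := by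
      rw [← cancel_epi (prod.map (𝟙 G) (prod.map (𝟙 G) π)), ← Category.assoc, hL,
        ← Category.assoc, hR, Category.assoc, Category.assoc, haQ, ← Category.assoc,
        ← Category.assoc, hμμ]
    have hcL : prod.lift g (prod.lift g' qp) ≫
        prod.lift (prod.lift prod.fst (prod.snd ≫ prod.fst) ≫ mul)
          (prod.snd ≫ prod.snd)
        = prod.lift (prod.lift g g' ≫ mul) qp := by
      apply Limits.prod.hom_ext
      · simp [prod.comp_lift_assoc]
      · simp
    have hcR : prod.lift g (prod.lift g' qp) ≫ prod.lift prod.fst (prod.snd ≫ aQ)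
        = prod.lift g (prod.lift g' qp ≫ aQ) := by
      apply Limits.prod.hom_ext <;> simp
    calc prod.lift (prod.lift g g' ≫ mul) qp ≫ aQ
        = (prod.lift g (prod.lift g' qp) ≫
            prod.lift (prod.lift prod.fst (prod.snd ≫ prod.fst) ≫ mul)
              (prod.snd ≫ prod.snd)) ≫ aQ := by rw [hcL]
      _ = (prod.lift g (prod.lift g' qp) ≫ prod.lift prod.fst (prod.snd ≫ aQ)) ≫ aQ := by
            rw [Category.assoc, key, ← Category.assoc]
      _ = prod.lift g (prod.lift g' qp ≫ aQ) ≫ aQ := by rw [hcR]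
  · -- invariance of the canonical point
    intro R h
    set t : R ⟶ T := h ≫ j ≫ prod.fst with ht
    set g : R ⟶ G := h ≫ j ≫ prod.snd with hg
    have hψ : prod.lift t g ≫ π = prod.lift t (terminal.from R ≫ one) ≫ π := by
      have h1 : prod.lift (terminal.from R ≫ one) h ≫ p = prod.lift t g := by
        subst hp; apply Limits.prod.hom_ext
        · simp [ht]
        · simp [hg, prod.comp_lift_assoc, hone_mul]
      have h2 : prod.lift (terminal.from R ≫ one) h ≫ q
          = prod.lift t (terminal.from R ≫ one) := by
        subst hq; apply Limits.prod.hom_ext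
        · simp [ht]
        · simp
      calc prod.lift t g ≫ π = prod.lift (terminal.from R ≫ one) h ≫ p ≫ π := by
            rw [← Category.assoc, h1]
        _ = prod.lift (terminal.from R ≫ one) h ≫ q ≫ π := by rw [hπ_eq]
        _ = prod.lift t (terminal.from R ≫ one) ≫ π := by rw [← Category.assoc, h2]
    have hpt : t ≫ prod.lift (𝟙 T) (terminal.from T ≫ one)
        = prod.lift t (terminal.from R ≫ one) := by
      apply Limits.prod.hom_ext
      · simp
      · simp only [Category.assoc, prod.lift_snd, prod.comp_lift, Category.comp_id]
        rw [← Category.assoc, terminal.comp_from]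
    have hstep1 : prod.lift g (t ≫ prod.lift (𝟙 T) (terminal.from T ≫ one) ≫ π)
        = prod.lift g (prod.lift t (terminal.from R ≫ one)) ≫ prod.map (𝟙 G) π := by
      apply Limits.prod.hom_ext
      · simp
      · simp only [prod.lift_snd, Category.assoc, prod.map_snd, prod.lift_snd_assoc]
        rw [← Category.assoc, hpt]
    have hstep2 : prod.lift g (prod.lift t (terminal.from R ≫ one)) ≫ μ
        = prod.lift t g := by
      apply Limits.prod.hom_ext
      · simp [hμ]
      · simp [hμ, prod.comp_lift_assoc, hmul_one]
    calc prod.lift g (t ≫ prod.lift (𝟙 T) (terminal.from T ≫ one) ≫ π) ≫ aQ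
        = prod.lift g (prod.lift t (terminal.from R ≫ one)) ≫ prod.map (𝟙 G) π ≫ aQ := by
          rw [hstep1, Category.assoc]
      _ = prod.lift g (prod.lift t (terminal.from R ≫ one)) ≫ μ ≫ π := by rw [haQ]
      _ = prod.lift t g ≫ π := by rw [← Category.assoc, hstep2]
      _ = prod.lift t (terminal.from R ≫ one) ≫ π := hψ
      _ = t ≫ prod.lift (𝟙 T) (terminal.from T ≫ one) ≫ π := by
          rw [← Category.assoc, hpt]
  · -- uniqueness
    rintro aQ' ⟨h1, -, -, -⟩
    exact huniq aQ' h1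
end
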